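/- Let Σ̂ and Σ be p×p real matrices with non-negative diagonal entries, let η ∈ (0,1) and d ∈ {2,…,p}, and suppose vᵀΣ̂v ≥ (1−η)vᵀΣv for every v ∈ ℝᵖ with at most d nonzero coordinates. Let D be a diagonal matrix with D[j,j] ≥ max(0, Σ̂[j,j] − (1−η)Σ[j,j]) for each j. Then for every x ∈ ℝᵖ, xᵀΣ̂x ≥ (1−η)·xᵀΣx − |D^{1/2}x|₁² / (d−1). -/

import Mathlib

open Matrix

open Finset in
lemma prodsum {p d : ℕ} (h : Fin d → Fin p → ℝ) :
    ∑ J : Fin d → Fin p, ∏ k, h k (J k) = ∏ k, ∑ a, h k a := by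
  rw [Finset.prod_univ_sum]; rfl


lemma marg1 {p d : ℕ} (π : Fin p → ℝ) (hπ : ∑ a, π a = 1) (k₀ : Fin d) (G : Fin p → ℝ) :
    ∑ J : Fin d → Fin p, (∏ k, π (J k)) * G (J k₀) = ∑ a, π a * G a := by
  have key : ∀ J : Fin d → Fin p,
      (∏ k, π (J k)) * G (J k₀) = ∏ k, (π (J k) * if k = k₀ then G (J k) else 1) := by
    intro J
    rw [Finset.prod_mul_distrib, Finset.prod_ite_eq' Finset.univ k₀ (fun k => G (J k))]
    simp
  calc ∑ J : Fin d → Fin p, (∏ k, π (J k)) * G (J k₀)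
      = ∑ J : Fin d → Fin p, ∏ k, (π (J k) * if k = k₀ then G (J k) else 1) :=
        Finset.sum_congr rfl fun J _ => key J
    _ = ∏ k, ∑ a, (π a * if k = k₀ then G a else 1) :=
        prodsum (fun k a => π a * if k = k₀ then G a else 1)
    _ = ∏ k : Fin d, (if k = k₀ then ∑ a, π a * G a else 1) := by
        refine Finset.prod_congr rfl fun k _ => ?_
        by_cases hk : k = k₀ <;> simp [hk, hπ]
    _ = ∑ a, π a * G a := by
        rw [Finset.prod_ite_eq' Finset.univ k₀ (fun _ => ∑ a, π a * G a)]
        simp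

lemma marg2_ind {p d : ℕ} (π : Fin p → ℝ) (hπ : ∑ a, π a = 1) (k₁ k₂ : Fin d)
    (hk : k₁ ≠ k₂) (a b : Fin p) :
    ∑ J : Fin d → Fin p, (∏ k, π (J k)) *
      ((if J k₁ = a then (1:ℝ) else 0) * (if J k₂ = b then 1 else 0)) = π a * π b := by
  have key : ∀ J : Fin d → Fin p,
      (∏ k, π (J k)) * ((if J k₁ = a then (1:ℝ) else 0) * (if J k₂ = b then 1 else 0))
      = ∏ k, (π (J k) * ((if k = k₁ then (if J k = a then (1:ℝ) else 0) else 1) *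
          (if k = k₂ then (if J k = b then (1:ℝ) else 0) else 1))) := by
    intro J
    rw [Finset.prod_mul_distrib, Finset.prod_mul_distrib,
      Finset.prod_ite_eq' Finset.univ k₁ (fun k => if J k = a then (1:ℝ) else 0),
      Finset.prod_ite_eq' Finset.univ k₂ (fun k => if J k = b then (1:ℝ) else 0)]
    simp [mul_assoc]
  calc ∑ J : Fin d → Fin p, (∏ k, π (J k)) *
        ((if J k₁ = a then (1:ℝ) else 0) * (if J k₂ = b then 1 else 0))
      = ∑ J : Fin d → Fin p, ∏ k, (π (J k) * ((if k = k₁ then (if J k = a then (1:ℝ) else 0) else 1) *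
          (if k = k₂ then (if J k = b then (1:ℝ) else 0) else 1))) :=
        Finset.sum_congr rfl fun J _ => key J
    _ = ∏ k, ∑ j, (π j * ((if k = k₁ then (if j = a then (1:ℝ) else 0) else 1) *
          (if k = k₂ then (if j = b then (1:ℝ) else 0) else 1))) :=
        prodsum (fun k j => π j * ((if k = k₁ then (if j = a then (1:ℝ) else 0) else 1) *
          (if k = k₂ then (if j = b then (1:ℝ) else 0) else 1)))
    _ = ∏ k : Fin d, ((if k = k₁ then π a else 1) * (if k = k₂ then π b else 1)) := by
        refine Finset.prod_congr rfl fun k _ => ?_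
        by_cases h1 : k = k₁
        · subst h1
          simp [hk, mul_ite, mul_one, mul_zero, Finset.sum_ite_eq' Finset.univ a π]
        · by_cases h2 : k = k₂
          · subst h2
            simp [h1, mul_ite, mul_one, mul_zero, Finset.sum_ite_eq' Finset.univ b π]
          · simp [h1, h2, hπ]
    _ = π a * π b := by
        rw [Finset.prod_mul_distrib,
          Finset.prod_ite_eq' Finset.univ k₁ (fun _ => π a),
          Finset.prod_ite_eq' Finset.univ k₂ (fun _ => π b)]
        simp

lemma marg2 {p d : ℕ} (π : Fin p → ℝ) (hπ : ∑ a, π a = 1) (k₁ k₂ : Fin d)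
    (hk : k₁ ≠ k₂) (F : Fin p → Fin p → ℝ) :
    ∑ J : Fin d → Fin p, (∏ k, π (J k)) * F (J k₁) (J k₂)
      = ∑ a, ∑ b, π a * π b * F a b := by
  have expand : ∀ J : Fin d → Fin p, F (J k₁) (J k₂)
      = ∑ a, ∑ b, ((if J k₁ = a then (1:ℝ) else 0) * (if J k₂ = b then 1 else 0)) * F a b := by
    intro J
    simp [ite_mul, mul_ite, Finset.sum_ite_eq]
  calc ∑ J : Fin d → Fin p, (∏ k, π (J k)) * F (J k₁) (J k₂)
      = ∑ J : Fin d → Fin p, ∑ a, ∑ b, ((∏ k, π (J k)) *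
          ((if J k₁ = a then (1:ℝ) else 0) * (if J k₂ = b then 1 else 0))) * F a b := by
        refine Finset.sum_congr rfl fun J _ => ?_
        rw [expand J, Finset.mul_sum]
        refine Finset.sum_congr rfl fun a _ => ?_
        rw [Finset.mul_sum]
        refine Finset.sum_congr rfl fun b _ => ?_
        ring
    _ = ∑ a, ∑ b, (∑ J : Fin d → Fin p, (∏ k, π (J k)) *
          ((if J k₁ = a then (1:ℝ) else 0) * (if J k₂ = b then 1 else 0))) * F a b := by
        rw [Finset.sum_comm]
        refine Finset.sum_congr rfl fun a _ => ?_
        rw [Finset.sum_comm]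
        refine Finset.sum_congr rfl fun b _ => ?_
        rw [Finset.sum_mul]
    _ = ∑ a, ∑ b, π a * π b * F a b := by
        refine Finset.sum_congr rfl fun a _ => Finset.sum_congr rfl fun b _ => ?_
        rw [marg2_ind π hπ k₁ k₂ hk a b]

open Matrix in
lemma core {p d : ℕ} (hd : 2 ≤ d) (A : Matrix (Fin p) (Fin p) ℝ) (D : Fin p → ℝ)
    (hDpos : ∀ j, 0 < D j) (hAd : ∀ j, A j j ≤ D j)
    (hA : ∀ v : Fin p → ℝ, (Finset.univ.filter (fun j => v j ≠ 0)).card ≤ d →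
      0 ≤ v ⬝ᵥ A.mulVec v)
    (x : Fin p → ℝ) :
    -(∑ j, Real.sqrt (D j) * |x j|) ^ 2 / ((d : ℝ) - 1) ≤ x ⬝ᵥ A.mulVec x := by
  by_cases hx : x = 0
  · subst hx
    simp [Matrix.mulVec, dotProduct]
  · -- setup
    set t : Fin p → ℝ := fun j => Real.sqrt (D j) * |x j| with ht
    have ht0 : ∀ j, 0 ≤ t j := fun j => mul_nonneg (Real.sqrt_nonneg _) (abs_nonneg _)
    have htx : ∀ j, t j = 0 → x j = 0 := by
      intro j hj
      have hs : Real.sqrt (D j) ≠ 0 := (Real.sqrt_pos.mpr (hDpos j)).ne'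
      have := mul_eq_zero.mp hj
      rcases this with h | h
      · exact absurd h hs
      · exact abs_eq_zero.mp h
    set S : ℝ := ∑ j, t j with hS
    have hSpos : 0 < S := by
      obtain ⟨j₀, hj₀⟩ : ∃ j, x j ≠ 0 := by
        by_contra h
        push_neg at h
        exact hx (funext h)
      have htj : 0 < t j₀ := by
        rcases lt_or_eq_of_le (ht0 j₀) with h | h
        · exact h
        · exact absurd (htx j₀ h.symm) hj₀
      exact lt_of_lt_of_le htj (Finset.single_le_sum (fun j _ => ht0 j) (Finset.mem_univ j₀))
    set π : Fin p → ℝ := fun j => t j / S with hπ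
    have hπ0 : ∀ j, 0 ≤ π j := fun j => div_nonneg (ht0 j) hSpos.le
    have hπsum : ∑ a, π a = 1 := by
      rw [hπ, ← Finset.sum_div]
      exact div_self hSpos.ne'
    set c : Fin p → ℝ := fun j => if t j = 0 then 0 else S * x j / t j with hc
    have hπc : ∀ j, π j * c j = x j := by
      intro j
      by_cases hj : t j = 0
      · simp [hc, hπ, hj, htx j hj]
      · simp only [hc, hπ, if_neg hj]
        field_simp
    -- the quadratic form
    set f : Fin p → Fin p → ℝ := fun a b => c a * (A a b * c b) with hf
    set X : ℝ := x ⬝ᵥ A.mulVec x with hX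
    set T₁ : ℝ := ∑ a, π a * f a a with hT₁
    have hXsum : ∑ a, ∑ b, π a * π b * f a b = X := by
      rw [hX]
      simp only [dotProduct, Matrix.mulVec, Finset.mul_sum]
      refine Finset.sum_congr rfl fun a _ => Finset.sum_congr rfl fun b _ => ?_
      have := hπc a
      have := hπc b
      calc π a * π b * f a b = (π a * c a) * (A a b * (π b * c b)) := by rw [hf]; ring
        _ = x a * (A a b * x b) := by rw [hπc a, hπc b]
    -- nonnegativity of E
    have hQnn : ∀ J : Fin d → Fin p, 0 ≤ ∑ k, ∑ l, f (J k) (J l) := by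
      intro J
      set v : Fin p → ℝ := fun j => ∑ k, if J k = j then c j else 0 with hv
      have hcard : (Finset.univ.filter (fun j => v j ≠ 0)).card ≤ d := by
        have hsub : Finset.univ.filter (fun j => v j ≠ 0) ⊆ Finset.image J Finset.univ := by
          intro j hj
          simp only [Finset.mem_filter, Finset.mem_univ, true_and] at hj
          obtain ⟨k, -, hk⟩ := Finset.exists_ne_zero_of_sum_ne_zero hj
          simp only [Finset.mem_image, Finset.mem_univ, true_and]
          exact ⟨k, by by_contra h; simp [h] at hk⟩
        calc (Finset.univ.filter (fun j => v j ≠ 0)).card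
            ≤ (Finset.image J Finset.univ).card := Finset.card_le_card hsub
          _ ≤ (Finset.univ : Finset (Fin d)).card := Finset.card_image_le
          _ = d := by simp
      have hmv : ∀ i, (A.mulVec v) i = ∑ l, A i (J l) * c (J l) := by
        intro i
        simp only [Matrix.mulVec, dotProduct, hv, Finset.mul_sum]
        rw [Finset.sum_comm]
        refine Finset.sum_congr rfl fun l _ => ?_
        simp [mul_ite, Finset.sum_ite_eq]
      have hQv : v ⬝ᵥ A.mulVec v = ∑ k, ∑ l, f (J k) (J l) := by
        simp only [dotProduct]
        calc ∑ i, v i * A.mulVec v i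
            = ∑ i, ∑ k, (if J k = i then c i * ∑ l, A i (J l) * c (J l) else 0) := by
              refine Finset.sum_congr rfl fun i _ => ?_
              rw [hmv i, hv]
              simp only [Finset.sum_mul, ite_mul, zero_mul]
          _ = ∑ k, ∑ i, (if J k = i then c i * ∑ l, A i (J l) * c (J l) else 0) :=
              Finset.sum_comm
          _ = ∑ k, c (J k) * ∑ l, A (J k) (J l) * c (J l) := by
              refine Finset.sum_congr rfl fun k _ => ?_
              simp [Finset.sum_ite_eq]
          _ = ∑ k, ∑ l, f (J k) (J l) := by
              refine Finset.sum_congr rfl fun k _ => ?_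
              rw [Finset.mul_sum]
      rw [← hQv]
      exact hA v hcard
    have hEnn : 0 ≤ ∑ J : Fin d → Fin p, (∏ k, π (J k)) * (∑ k, ∑ l, f (J k) (J l)) :=
      Finset.sum_nonneg fun J _ =>
        mul_nonneg (Finset.prod_nonneg fun k _ => hπ0 _) (hQnn J)
    -- compute E
    have hEcomp : ∑ J : Fin d → Fin p, (∏ k, π (J k)) * (∑ k, ∑ l, f (J k) (J l))
        = (d : ℝ) * ((d : ℝ) * X + (T₁ - X)) := by
      calc ∑ J : Fin d → Fin p, (∏ k, π (J k)) * (∑ k, ∑ l, f (J k) (J l))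
          = ∑ J : Fin d → Fin p, ∑ k, ∑ l, (∏ k, π (J k)) * f (J k) (J l) := by
            refine Finset.sum_congr rfl fun J _ => ?_
            rw [Finset.mul_sum]
            exact Finset.sum_congr rfl fun k _ => Finset.mul_sum _ _ _
          _ = ∑ k, ∑ l, ∑ J : Fin d → Fin p, (∏ k, π (J k)) * f (J k) (J l) := by
            rw [Finset.sum_comm]
            exact Finset.sum_congr rfl fun k _ => Finset.sum_comm
          _ = ∑ k : Fin d, ∑ l : Fin d, (X + if k = l then T₁ - X else 0) := by
            refine Finset.sum_congr rfl fun k _ => Finset.sum_congr rfl fun l _ => ?_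
            by_cases hkl : k = l
            · subst hkl
              rw [marg1 π hπsum k (fun a => f a a), if_pos rfl, hT₁]
              ring
            · rw [marg2 π hπsum k l hkl f, hXsum]
              simp [hkl]
          _ = (d : ℝ) * ((d : ℝ) * X + (T₁ - X)) := by
            simp [Finset.sum_add_distrib, Finset.sum_ite_eq, Finset.mul_sum]
            ring
    -- bound T₁
    have hT₁le : T₁ ≤ S * S := by
      rw [hT₁]
      calc ∑ a, π a * f a a ≤ ∑ a, S * t a := by
            refine Finset.sum_le_sum fun a _ => ?_
            by_cases h : t a = 0
            · have hc0 : c a = 0 := by simp [hc, h]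
              simp [hf, hc0, h]
            · have hta : 0 < t a := (ht0 a).lt_of_ne (Ne.symm h)
              have hca : c a = S * x a / t a := by simp [hc, h]
              have hsq : t a ^ 2 = D a * x a ^ 2 := by
                have htaa : t a = Real.sqrt (D a) * |x a| := rfl
                rw [htaa, mul_pow, Real.sq_sqrt (hDpos a).le, sq_abs]
              calc π a * f a a = (π a * c a) * (A a a * c a) := by simp only [hf]; ring
                _ = x a * (A a a * (S * x a / t a)) := by rw [hπc a, hca]
                _ = (A a a * x a ^ 2) * (S / t a) := by
                    field_simp
                _ ≤ (D a * x a ^ 2) * (S / t a) := by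
                    apply mul_le_mul_of_nonneg_right _ (div_nonneg hSpos.le (ht0 a))
                    exact mul_le_mul_of_nonneg_right (hAd a) (sq_nonneg _)
                _ = t a ^ 2 * (S / t a) := by rw [hsq]
                _ = S * t a := by
                    field_simp
        _ = S * S := by rw [← Finset.mul_sum, ← hS]
    -- conclude
    have hd2 : (2:ℝ) ≤ (d:ℝ) := by exact_mod_cast hd
    have h1 : 0 ≤ (d : ℝ) * ((d : ℝ) * X + (T₁ - X)) := hEcomp ▸ hEnn
    have h2 : 0 ≤ (d : ℝ) * X + (T₁ - X) :=
      nonneg_of_mul_nonneg_right h1 (by linarith)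
    rw [div_le_iff₀ (by linarith : (0:ℝ) < (d:ℝ) - 1)]
    nlinarith [h2, hT₁le]

open Matrix

/-- Transfer Principle: lower-tail control of a quadratic form over `d`-sparse vectors
transfers to all vectors, with an `ℓ₁` correction term. `D` is the vector of diagonal
entries of the diagonal matrix. -/
theorem transfer_principle {p : ℕ} (Sigmahat Sigma : Matrix (Fin p) (Fin p) ℝ)
    (hdiag1 : ∀ j, 0 ≤ Sigmahat j j) (hdiag2 : ∀ j, 0 ≤ Sigma j j)
    (η : ℝ) (hη : η ∈ Set.Ioo (0 : ℝ) 1) (d : ℕ) (hd : 2 ≤ d) (hdp : d ≤ p)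
    (hsparse : ∀ v : Fin p → ℝ,
      (Finset.univ.filter (fun j => v j ≠ 0)).card ≤ d →
      v ⬝ᵥ Sigmahat.mulVec v ≥ (1 - η) * (v ⬝ᵥ Sigma.mulVec v))
    (D : Fin p → ℝ)
    (hD : ∀ j, D j ≥ max 0 (Sigmahat j j - (1 - η) * Sigma j j)) :
    ∀ x : Fin p → ℝ,
      x ⬝ᵥ Sigmahat.mulVec x ≥
        (1 - η) * (x ⬝ᵥ Sigma.mulVec x) -
          (∑ j, |Real.sqrt (D j) * x j|) ^ 2 / ((d : ℝ) - 1) := by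
  intro x
  set A : Matrix (Fin p) (Fin p) ℝ := Sigmahat - (1 - η) • Sigma with hA
  have hbil : ∀ v : Fin p → ℝ, v ⬝ᵥ A.mulVec v
      = v ⬝ᵥ Sigmahat.mulVec v - (1 - η) * (v ⬝ᵥ Sigma.mulVec v) := by
    intro v
    rw [hA, Matrix.sub_mulVec, dotProduct_sub, Matrix.smul_mulVec,
      dotProduct_smul, smul_eq_mul]
  have hAsp : ∀ v : Fin p → ℝ, (Finset.univ.filter (fun j => v j ≠ 0)).card ≤ d →
      0 ≤ v ⬝ᵥ A.mulVec v := by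
    intro v hv
    rw [hbil]
    linarith [hsparse v hv]
  have hAd : ∀ j, A j j ≤ D j := by
    intro j
    have : A j j = Sigmahat j j - (1 - η) * Sigma j j := by
      simp [hA, Matrix.sub_apply, Matrix.smul_apply, smul_eq_mul]
    rw [this]
    exact le_trans (le_max_right _ _) (hD j)
  have hDnn : ∀ j, 0 ≤ D j := fun j => le_trans (le_max_left _ _) (hD j)
  have key : ∀ ε : ℝ, ε ∈ Set.Ioi (0:ℝ) →
      -(∑ j, Real.sqrt (D j + ε) * |x j|) ^ 2 / ((d : ℝ) - 1) ≤ x ⬝ᵥ A.mulVec x := by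
    intro ε hε
    simp only [Set.mem_Ioi] at hε
    exact core hd A (fun j => D j + ε) (fun j => by linarith [hDnn j])
      (fun j => by linarith [hAd j]) hAsp x
  have hcontf : Continuous fun ε : ℝ =>
      -(∑ j, Real.sqrt (D j + ε) * |x j|) ^ 2 / ((d : ℝ) - 1) := by
    apply Continuous.div_const
    apply Continuous.neg
    apply Continuous.pow
    apply continuous_finset_sum
    intro j _
    exact (Real.continuous_sqrt.comp (continuous_const.add continuous_id)).mul continuous_const
  have hlim : Filter.Tendsto (fun ε : ℝ =>
      -(∑ j, Real.sqrt (D j + ε) * |x j|) ^ 2 / ((d : ℝ) - 1))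
      (nhdsWithin 0 (Set.Ioi 0))
      (nhds (-(∑ j, Real.sqrt (D j + 0) * |x j|) ^ 2 / ((d : ℝ) - 1))) :=
    (hcontf.tendsto 0).mono_left nhdsWithin_le_nhds
  have hfin : -(∑ j, Real.sqrt (D j + 0) * |x j|) ^ 2 / ((d : ℝ) - 1) ≤ x ⬝ᵥ A.mulVec x :=
    le_of_tendsto hlim (eventually_nhdsWithin_of_forall key)
  rw [hbil, neg_div] at hfin
  have habs : ∀ j, |Real.sqrt (D j) * x j| = Real.sqrt (D j + 0) * |x j| := by
    intro j
    rw [add_zero, abs_mul, abs_of_nonneg (Real.sqrt_nonneg _)]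
  simp only [habs]
  linarith [hfin]
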